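/- If in every round at most one token arrives at process i and arrivals to i are separated by at least C+1 rounds, while process i (running the delay program with counter domain [0,C]) releases a token whenever cᵢ = 0 ∧ rᵢ > 0 (resetting cᵢ to C) and otherwise decrements cᵢ when cᵢ > 0, then throughout the execution rᵢ never exceeds 1 + rᵢ(σ), where rᵢ(σ) is its initial value. -/
import Mathlib


/-- One step of a single delay process with counter domain `[0,C]`:
absorb a (possible) arrival into `r`; then release a token when
`c = 0 ∧ r > 0` (resetting `c ← C`), otherwise decrement `c` when positive.
State is `(r, c) : ℕ × ℕ`. -/
def dstep (C : ℕ) (arr : Bool) (s : ℕ × ℕ) : ℕ × ℕ :=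
  let r' := s.1 + (if arr then 1 else 0)
  if s.2 = 0 ∧ 0 < r' then (r' - 1, C) else (r', s.2 - 1)

/-- Trajectory of the delay process from initial state `σ` under arrival
sequence `a`. -/
def traj (C : ℕ) (a : ℕ → Bool) (σ : ℕ × ℕ) : ℕ → ℕ × ℕ
  | 0 => σ
  | t + 1 => dstep C (a t) (traj C a σ t)

/-- If at most one token arrives per round and arrivals are separated by at
least `C+1` rounds, then the number of resting tokens `r` never exceeds
`1 + r(σ)`, its initial value plus one. -/
theorem stmt_3 (C : ℕ) (a : ℕ → Bool)
    (hgap : ∀ t t' : ℕ, t < t' → a t = true → a t' = true → C + 1 ≤ t' - t)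
    (σ : ℕ × ℕ) (hc : σ.2 ≤ C) :
    ∀ t : ℕ, (traj C a σ t).1 ≤ 1 + σ.1 := by
  suffices h : ∀ t, (traj C a σ t).2 ≤ C ∧ (traj C a σ t).1 ≤ 1 + σ.1 ∧
      ((traj C a σ t).1 = 1 + σ.1 → ∀ t', t ≤ t' → a t' = true →
        (traj C a σ t).2 ≤ t' - t) from fun t => (h t).2.1
  intro t
  induction t with
  | zero =>
    show σ.2 ≤ C ∧ σ.1 ≤ 1 + σ.1 ∧ (σ.1 = 1 + σ.1 → _)
    exact ⟨hc, by omega, fun h => by omega⟩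
  | succ t ih =>
    obtain ⟨hC, hr, hcond⟩ := ih
    have hstep : traj C a σ (t + 1) = dstep C (a t) (traj C a σ t) := rfl
    cases harr : a t with
    | true =>
      by_cases hz : (traj C a σ t).2 = 0
      · -- counter zero, release
        have h1 : traj C a σ (t+1) = ((traj C a σ t).1, C) := by
          rw [hstep]; simp [dstep, harr, hz]
        rw [h1]
        refine ⟨le_refl _, by omega, ?_⟩
        intro _ t' ht' ha'
        have := hgap t t' (by omega) harr ha'
        simpa using by omega
      · -- counter positive, no release, r grows
        have h1 : traj C a σ (t+1) = ((traj C a σ t).1 + 1, (traj C a σ t).2 - 1) := by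
          rw [hstep]; simp [dstep, harr, hz]
        have hrt : (traj C a σ t).1 < 1 + σ.1 := by
          rcases lt_or_eq_of_le hr with h | h
          · exact h
          · exfalso; have := hcond h t (le_refl t) harr; omega
        rw [h1]
        refine ⟨by omega, by omega, ?_⟩
        intro _ t' ht' ha'
        have := hgap t t' (by omega) harr ha'
        simp only; omega
    | false =>
      by_cases hz : (traj C a σ t).2 = 0 ∧ 0 < (traj C a σ t).1
      · have h1 : traj C a σ (t+1) = ((traj C a σ t).1 - 1, C) := by
          rw [hstep]; simp [dstep, harr, hz.1, hz.2]
        rw [h1]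
        refine ⟨le_refl _, by omega, fun h => by simp only at h; omega⟩
      · have h1 : traj C a σ (t+1) = ((traj C a σ t).1, (traj C a σ t).2 - 1) := by
          rw [hstep]; simp only [dstep, harr, if_false, Bool.false_eq_true,
            Nat.add_zero, if_neg hz]
        rw [h1]
        refine ⟨by omega, by omega, ?_⟩
        intro h t' ht' ha'
        have := hcond h t' (by omega) ha'
        have hne : t ≠ t' := fun e => by rw [e] at harr; rw [harr] at ha'; exact absurd ha' (by simp)
        simp only; omega
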